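/- Let A be an n×n integer matrix with rank n, Smith form diag(s_1, ..., s_n) with s_i | s_{i+1}. Let B be an n×k integer matrix and let X = (1/s̃)·N be the rational solution of AX = B written with common denominator s̃ (so gcd of s̃ and all entries of N is 1). Then for each i = 1, ..., k, the integer s̃ / gcd(s_i(N), s̃) divides s_{n-i+1}(A), where s_i(N) is the i-th invariant factor of N. -/

import Mathlib

/-- Let `A` be a nonsingular `n×n` integer matrix with Smith form
`diag s` (`s i ∣ s j` for `i ≤ j`), and let `N` satisfy `A·N = s̃•B` with
`gcd(s̃, entries of N) = 1` (so `X = (1/s̃)·N` solves `AX = B`).  If `tN` are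
the invariant factors of `N` (via a Smith decomposition of `N`), then for each
`i = 1, …, k` the integer `s̃ / gcd(tN i, s̃)` divides `s_{n-i+1}(A)`. -/
theorem stmt_9 (n k : ℕ) (hk : k ≤ n) (A : Matrix (Fin n) (Fin n) ℤ)
    (hA : A.det ≠ 0)
    (U V : Matrix (Fin n) (Fin n) ℤ) (hU : IsUnit U.det) (hV : IsUnit V.det)
    (s : Fin n → ℤ) (hchain : ∀ i j : Fin n, i ≤ j → s i ∣ s j)
    (hsmith : A = U * Matrix.diagonal s * V)
    (B N : Matrix (Fin n) (Fin k) ℤ) (st : ℤ) (hst : 0 < st)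
    (hsol : A * N = st • B)
    (hcop : IsCoprime st
      ((Finset.univ : Finset (Fin n × Fin k)).gcd fun q => N q.1 q.2))
    (UN : Matrix (Fin n) (Fin n) ℤ) (VN : Matrix (Fin k) (Fin k) ℤ)
    (hUN : IsUnit UN.det) (hVN : IsUnit VN.det)
    (tN : Fin k → ℤ) (htchain : ∀ i j : Fin k, i ≤ j → tN i ∣ tN j)
    (hsmithN : N = UN * (Matrix.of fun (i : Fin n) (j : Fin k) =>
      if (i : ℕ) = (j : ℕ) then tN j else 0) * VN) :
    ∀ i : Fin k, (st / (Int.gcd (tN i) st : ℤ)) ∣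
      s ⟨n - 1 - (i : ℕ), by have := i.isLt; omega⟩ := by
  intro i
  have hik : (i : ℕ) < k := i.isLt
  set DN : Matrix (Fin n) (Fin k) ℤ := Matrix.of fun (p : Fin n) (j : Fin k) =>
      if (p : ℕ) = (j : ℕ) then tN j else 0 with hDN
  set W : Matrix (Fin n) (Fin n) ℤ := V * UN with hW
  -- key identity : diag s * W * DN = st • C with C integral
  have e1 : U⁻¹ * (A * N) * VN⁻¹ = Matrix.diagonal s * (W * DN) := by
    rw [hsmith, hsmithN]
    rw [show U * Matrix.diagonal s * V * (UN * DN * VN)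
        = U * (Matrix.diagonal s * (W * DN) * VN) by
      simp only [Matrix.mul_assoc, hW]]
    rw [Matrix.nonsing_inv_mul_cancel_left _ _ hU,
      Matrix.mul_nonsing_inv_cancel_right _ _ hVN]
  have hkey : Matrix.diagonal s * (W * DN) = st • (U⁻¹ * B * VN⁻¹) := by
    rw [← e1, hsol, Matrix.mul_smul, Matrix.smul_mul]
  -- entrywise divisibility
  have hdvd : ∀ (j : Fin n) (m : Fin k),
      st ∣ s j * W j (Fin.castLE hk m) * tN m := by
    intro j m
    have e2 : (Matrix.diagonal s * (W * DN)) j m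
        = s j * W j (Fin.castLE hk m) * tN m := by
      rw [Matrix.diagonal_mul, Matrix.mul_apply]
      rw [Finset.sum_eq_single (Fin.castLE hk m)]
      · simp [hDN, mul_assoc]
      · intro p _ hp
        have : (p : ℕ) ≠ (m : ℕ) := by
          intro h; exact hp (Fin.ext (by simpa using h))
        simp [hDN, this]
      · simp
    have e3 := congrFun (congrFun hkey j) m
    rw [e2] at e3
    exact ⟨(U⁻¹ * B * VN⁻¹) j m, by rw [e3]; simp⟩
  -- divide by the gcd
  have hgpos : 0 < Int.gcd (tN i) st := Int.gcd_pos_iff.mpr (Or.inr hst.ne')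
  set g : ℤ := (Int.gcd (tN i) st : ℤ) with hg
  have hgne : g ≠ 0 := by rw [hg]; exact_mod_cast hgpos.ne'
  set q : ℤ := st / g with hq
  set t : ℤ := tN i / g with ht
  have hstgq : st = g * q := (Int.mul_ediv_cancel' (Int.gcd_dvd_right _ _)).symm
  have htgt : tN i = g * t := (Int.mul_ediv_cancel' (Int.gcd_dvd_left _ _)).symm
  have hcoqt : IsCoprime q t := by
    rw [Int.isCoprime_iff_gcd_eq_one, Int.gcd_comm]
    exact Int.gcd_div_gcd_div_gcd hgpos
  have hq' : ∀ (j : Fin n) (m : Fin k), (m : ℕ) ≤ (i : ℕ) →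
      q ∣ s j * W j (Fin.castLE hk m) := by
    intro j m hm
    have h3 : st ∣ s j * W j (Fin.castLE hk m) * tN i :=
      dvd_trans (hdvd j m) (mul_dvd_mul_left _ (htchain m i hm))
    rw [hstgq, htgt, show s j * W j (Fin.castLE hk m) * (g * t)
        = g * (s j * W j (Fin.castLE hk m) * t) by ring] at h3
    have h4 : q ∣ s j * W j (Fin.castLE hk m) * t :=
      (mul_dvd_mul_iff_left hgne).mp h3
    exact hcoqt.dvd_of_dvd_mul_right h4
  -- pigeonhole on permutations
  have hEx : ∀ σ : Equiv.Perm (Fin n), ∃ c : Fin n,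
      (c : ℕ) ≤ (i : ℕ) ∧ ((σ c : ℕ) ≤ n - 1 - (i : ℕ)) := by
    intro σ
    by_contra hcon
    push_neg at hcon
    set c0 : Fin n := ⟨(i : ℕ), lt_of_lt_of_le hik hk⟩ with hc0
    set r0 : Fin n := ⟨n - 1 - (i : ℕ), by omega⟩ with hr0
    have hsub : ∀ c ∈ Finset.Iic c0, σ c ∈ Finset.Ioi r0 := by
      intro c hc
      rw [Finset.mem_Iic, Fin.le_def] at hc
      rw [Finset.mem_Ioi, Fin.lt_def]
      exact hcon c hc
    have hcard := Finset.card_le_card_of_injOn σ hsub σ.injective.injOn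
    rw [Fin.card_Iic, Fin.card_Ioi] at hcard
    simp only [hc0, hr0] at hcard
    omega
  -- conclusion via det W
  have hWdet : IsUnit W.det := by
    rw [hW, Matrix.det_mul]; exact hV.mul hUN
  set sI : ℤ := s ⟨n - 1 - (i : ℕ), by have := i.isLt; omega⟩ with hsI
  have hmain : q ∣ sI * W.det := by
    rw [Matrix.det_apply', Finset.mul_sum]
    apply Finset.dvd_sum
    intro σ _
    obtain ⟨c, hc1, hc2⟩ := hEx σ
    have hmk : (⟨(c : ℕ), lt_of_le_of_lt hc1 hik⟩ : Fin k) = (⟨(c : ℕ), lt_of_le_of_lt hc1 hik⟩ : Fin k) := rfl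
    set m : Fin k := ⟨(c : ℕ), lt_of_le_of_lt hc1 hik⟩ with hm
    have hcm : Fin.castLE hk m = c := Fin.ext rfl
    have hq1 : q ∣ s (σ c) * W (σ c) c := by
      have := hq' (σ c) m hc1
      rwa [hcm] at this
    have hs1 : s (σ c) ∣ sI := hchain _ _ (by rw [Fin.le_def]; exact hc2)
    have hq2 : q ∣ sI * W (σ c) c := hq1.trans (mul_dvd_mul_right hs1 _)
    have hq3 : q ∣ sI * ∏ c', W (σ c') c' := by
      rw [← Finset.mul_prod_erase _ _ (Finset.mem_univ c), ← mul_assoc]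
      exact hq2.mul_right _
    rw [mul_left_comm]
    exact hq3.mul_left _
  have := hmain.trans (mul_dvd_mul_left sI (isUnit_iff_dvd_one.mp hWdet))
  simpa using this
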